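/- (Proposition 3.5) Suppose a discrete form Ω : ℤ⁴ → Cl satisfies the discrete Joyce equation iDΩ = mΩe₀. Then Ω = ΩP_{+12} + ΩP_{−12}, where ΩP_{+12} satisfies the discrete Hestenes equation −(D(ΩP_{+12}))e₁e₂ = m(ΩP_{+12})e₀, while ΩP_{−12} satisfies the same equation with reversed mass sign: −(D(ΩP_{−12}))e₁e₂ = −m(ΩP_{−12})e₀. -/
import Mathlib


noncomputable section

/-- The Minkowski quadratic form `Q v = v₀² − v₁² − v₂² − v₃²` on `ℂ⁴`. -/
def Q : QuadraticForm ℂ (Fin 4 → ℂ) :=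
  QuadraticMap.weightedSumSquares ℂ ![(1 : ℂ), -1, -1, -1]

/-- The Clifford algebra of spacetime over `ℂ`. -/
abbrev Cl : Type := CliffordAlgebra Q

/-- The generators `e_μ`, images of the standard basis vectors. -/
def e (μ : Fin 4) : Cl := CliffordAlgebra.ι Q (Pi.single μ 1)

/-- The volume element `e = e₀e₁e₂e₃`. -/
def eV : Cl := e 0 * e 1 * e 2 * e 3

/-- The difference operator `(Δ_μ Ω)(k) = Ω(k + 1_μ) − Ω(k)`. -/
def Δ (μ : Fin 4) (Ω : (Fin 4 → ℤ) → Cl) : (Fin 4 → ℤ) → Cl :=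
  fun k => Ω (k + Pi.single μ 1) - Ω k

/-- The discrete Dirac operator `DΩ = Σ_μ e_μ · (Δ_μ Ω)`. -/
def Dirac (Ω : (Fin 4 → ℤ) → Cl) : (Fin 4 → ℤ) → Cl :=
  fun k => ∑ μ : Fin 4, e μ * Δ μ Ω k

def P12p : Cl := (2⁻¹ : ℂ) • (1 + Complex.I • (e 1 * e 2))
def P12m : Cl := (2⁻¹ : ℂ) • (1 - Complex.I • (e 1 * e 2))

lemma e_sq (μ : Fin 4) : e μ * e μ = algebraMap ℂ Cl (Q (Pi.single μ 1)) :=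
  CliffordAlgebra.ι_sq_scalar Q _

lemma Q1 : Q (Pi.single (1 : Fin 4) 1) = -1 := by
  simp [Q, QuadraticMap.weightedSumSquares_apply, Pi.single_apply, Fin.sum_univ_four]

lemma e1_sq : e 1 * e 1 = -1 := by
  rw [e_sq, Q1]; simp

lemma Q2 : Q (Pi.single (2 : Fin 4) 1) = -1 := by
  simp [Q, QuadraticMap.weightedSumSquares_apply, Pi.single_apply, Fin.sum_univ_four]

lemma e2_sq : e 2 * e 2 = -1 := by
  rw [e_sq, Q2]; simp

lemma e_anticomm {μ ν : Fin 4} (h : μ ≠ ν) : e μ * e ν = -(e ν * e μ) := by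
  have hpol : QuadraticMap.polar Q (Pi.single μ 1) (Pi.single ν (1:ℂ)) = 0 := by
    fin_cases μ <;> fin_cases ν <;> simp_all <;>
      simp [QuadraticMap.polar, Q, QuadraticMap.weightedSumSquares_apply,
        Pi.single_apply, Fin.sum_univ_four]
  have := CliffordAlgebra.ι_mul_ι_add_swap (Q := Q) (Pi.single μ 1) (Pi.single ν 1)
  rw [hpol, map_zero] at this
  have := add_eq_zero_iff_eq_neg.mp this
  simpa [e] using this

lemma E_sq : (e 1 * e 2) * (e 1 * e 2) = -1 := by
  have h21 : e 2 * e 1 = -(e 1 * e 2) := e_anticomm (by decide)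
  calc (e 1 * e 2) * (e 1 * e 2) = e 1 * (e 2 * e 1) * e 2 := by noncomm_ring
    _ = e 1 * -(e 1 * e 2) * e 2 := by rw [h21]
    _ = -((e 1 * e 1) * (e 2 * e 2)) := by noncomm_ring
    _ = -1 := by rw [e1_sq, e2_sq]; simp

lemma e0_comm_E : e 0 * (e 1 * e 2) = (e 1 * e 2) * e 0 := by
  have h01 : e 0 * e 1 = -(e 1 * e 0) := e_anticomm (by decide)
  have h02 : e 0 * e 2 = -(e 2 * e 0) := e_anticomm (by decide)
  calc e 0 * (e 1 * e 2) = (e 0 * e 1) * e 2 := by noncomm_ring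
    _ = -(e 1 * (e 0 * e 2)) := by rw [h01]; noncomm_ring
    _ = -(e 1 * -(e 2 * e 0)) := by rw [h02]
    _ = (e 1 * e 2) * e 0 := by noncomm_ring

lemma Pp_mul_E : -(P12p * (e 1 * e 2)) = Complex.I • P12p := by
  simp only [P12p, smul_mul_assoc, add_mul, one_mul, E_sq]
  match_scalars <;> simp [Complex.ext_iff] <;> norm_num

lemma Pm_mul_E : -(P12m * (e 1 * e 2)) = -(Complex.I • P12m) := by
  simp only [P12m, smul_mul_assoc, sub_mul, one_mul, E_sq]
  match_scalars <;> simp [Complex.ext_iff] <;> norm_num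

lemma e0_comm_Pp : e 0 * P12p = P12p * e 0 := by
  simp only [P12p, mul_smul_comm, smul_mul_assoc, mul_add, add_mul, one_mul, mul_one,
    mul_smul_comm, smul_mul_assoc, e0_comm_E]

lemma e0_comm_Pm : e 0 * P12m = P12m * e 0 := by
  simp only [P12m, mul_smul_comm, smul_mul_assoc, mul_sub, sub_mul, one_mul, mul_one,
    mul_smul_comm, smul_mul_assoc, e0_comm_E]

lemma Dirac_mul_const (Ω : (Fin 4 → ℤ) → Cl) (c : Cl) (k : Fin 4 → ℤ) :
    Dirac (fun k => Ω k * c) k = Dirac Ω k * c := by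
  simp [Dirac, Δ, Finset.sum_mul, sub_mul, mul_assoc]

lemma P_sum : P12p + P12m = 1 := by
  simp only [P12p, P12m]
  module

/-- Proposition 3.5: a solution `Ω` of the discrete Joyce equation `iDΩ = mΩe₀`
decomposes as `Ω = ΩP_{+12} + ΩP_{−12}`, where `ΩP_{+12}` satisfies the discrete
Hestenes equation and `ΩP_{−12}` satisfies it with reversed mass sign. -/
theorem stmt_7 (m : ℝ) (Ω : (Fin 4 → ℤ) → Cl)
    (hΩ : ∀ k, Complex.I • Dirac Ω k = (m : ℂ) • (Ω k * e 0)) :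
    (∀ k, Ω k = Ω k * P12p + Ω k * P12m) ∧
    (∀ k, -(Dirac (fun k => Ω k * P12p) k * (e 1 * e 2)) =
      (m : ℂ) • ((Ω k * P12p) * e 0)) ∧
    (∀ k, -(Dirac (fun k => Ω k * P12m) k * (e 1 * e 2)) =
      -((m : ℂ) • ((Ω k * P12m) * e 0))) := by
  refine ⟨fun k => by rw [← mul_add, P_sum, mul_one], fun k => ?_, fun k => ?_⟩
  · rw [Dirac_mul_const, mul_assoc, ← mul_neg, Pp_mul_E, mul_smul_comm, ← smul_mul_assoc,
      hΩ k, smul_mul_assoc, mul_assoc, e0_comm_Pp, ← mul_assoc]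
  · rw [Dirac_mul_const, mul_assoc, ← mul_neg, Pm_mul_E, mul_neg, mul_smul_comm,
      ← smul_mul_assoc, hΩ k, smul_mul_assoc, mul_assoc, e0_comm_Pm, ← mul_assoc]
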